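/- Let q be a real number with 0 < q < 1 and let O(S²_{q,1}) be the quotient of the free unital ℂ-algebra on generators K, L, L′ by the two-sided ideal generated by LK − q²KL, KL′ − q²L′K, L′L + K² − 1, LL′ + q⁴K² − 1. Then the assignment K ↦ −K, L ↦ −L, L′ ↦ −L′ extends to a well-defined ℂ-algebra automorphism r₂ of O(S²_{q,1}) with r₂ ∘ r₂ = id, and the fixed-point subalgebra {a ∈ O(S²_{q,1}) : r₂(a) = a} equals the unital subalgebra generated by the elements K², L², KL, (L′)², and L′K. -/

import Mathlib

namespace PodlesSphere

/-- Generator `K` of `O(S²_{q,1})` in the free algebra on three generators. -/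
noncomputable def K : FreeAlgebra ℂ (Fin 3) := FreeAlgebra.ι ℂ 0
/-- Generator `L` of `O(S²_{q,1})`. -/
noncomputable def L : FreeAlgebra ℂ (Fin 3) := FreeAlgebra.ι ℂ 1
/-- Generator `L′ = L*` of `O(S²_{q,1})`. -/
noncomputable def L' : FreeAlgebra ℂ (Fin 3) := FreeAlgebra.ι ℂ 2

/-- The defining relations of the coordinate algebra `O(S²_{q,1})` of the equator Podleś
quantum sphere, on generators `K, L, L′` (with `L′` playing the role of `L*`):
`LK = q²KL`, `KL′ = q²L′K`, `L′L + K² = 1`, `LL′ + q⁴K² = 1`. -/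
inductive Rel (q : ℝ) : FreeAlgebra ℂ (Fin 3) → FreeAlgebra ℂ (Fin 3) → Prop
  | rel1 : Rel q (L * K) (((q : ℂ) ^ 2) • (K * L))
  | rel2 : Rel q (K * L') (((q : ℂ) ^ 2) • (L' * K))
  | rel3 : Rel q (L' * L + K * K) 1
  | rel4 : Rel q (L * L' + ((q : ℂ) ^ 4) • (K * K)) 1

end PodlesSphere



namespace Stmt16
open PodlesSphere

variable (q : ℝ)

noncomputable def mk : FreeAlgebra ℂ (Fin 3) →ₐ[ℂ] RingQuot (Rel q) :=
  RingQuot.mkAlgHom ℂ (Rel q)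

noncomputable def k : RingQuot (Rel q) := mk q K
noncomputable def l : RingQuot (Rel q) := mk q L
noncomputable def l' : RingQuot (Rel q) := mk q L'

noncomputable def c : ℂ := (q : ℂ) ^ 2

lemma hr1 : l q * k q = c q • (k q * l q) := by
  simpa [mk, k, l, c, map_mul, map_smul] using
    RingQuot.mkAlgHom_rel ℂ (Rel.rel1 (q := q))

lemma hr2 : k q * l' q = c q • (l' q * k q) := by
  simpa [mk, k, l', c, map_mul, map_smul] using
    RingQuot.mkAlgHom_rel ℂ (Rel.rel2 (q := q))

lemma hr3 : l' q * l q + k q * k q = 1 := by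
  simpa [mk, k, l, l', map_mul, map_add, map_one] using
    RingQuot.mkAlgHom_rel ℂ (Rel.rel3 (q := q))

lemma hr4 : l q * l' q + (c q ^ 2) • (k q * k q) = 1 := by
  have h := RingQuot.mkAlgHom_rel ℂ (Rel.rel4 (q := q))
  have h4 : ((q : ℂ) ^ 4) = c q ^ 2 := by rw [c]; ring
  simpa [mk, k, l, l', map_mul, map_add, map_one, map_smul, h4] using h

end Stmt16

namespace Stmt16
open PodlesSphere

variable (q : ℝ)

noncomputable def σf : FreeAlgebra ℂ (Fin 3) →ₐ[ℂ] RingQuot (Rel q) :=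
  FreeAlgebra.lift ℂ fun i => -(mk q (FreeAlgebra.ι ℂ i))

lemma σf_ι (i : Fin 3) : σf q (FreeAlgebra.ι ℂ i) = -(mk q (FreeAlgebra.ι ℂ i)) := by
  simp [σf]

lemma σf_rel : ∀ ⦃x y⦄, Rel q x y → σf q x = σf q y := by
  have e : ∀ a b : RingQuot (Rel q), -a * -b = a * b := fun a b => neg_mul_neg a b
  intro x y h
  induction h with
  | rel1 =>
    simp only [map_mul, map_smul, K, L, σf_ι]
    rw [e, e]
    simpa [mk, K, L, map_mul, map_smul] using RingQuot.mkAlgHom_rel ℂ (Rel.rel1 (q := q))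
  | rel2 =>
    simp only [map_mul, map_smul, K, L', σf_ι]
    rw [e, e]
    simpa [mk, K, L', map_mul, map_smul] using RingQuot.mkAlgHom_rel ℂ (Rel.rel2 (q := q))
  | rel3 =>
    simp only [map_mul, map_smul, map_add, map_one, K, L, L', σf_ι]
    rw [e, e]
    simpa [mk, K, L, L', map_mul, map_add, map_one] using
      RingQuot.mkAlgHom_rel ℂ (Rel.rel3 (q := q))
  | rel4 =>
    simp only [map_mul, map_smul, map_add, map_one, K, L, L', σf_ι]
    rw [e, e]
    simpa [mk, K, L, L', map_mul, map_add, map_one, map_smul] using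
      RingQuot.mkAlgHom_rel ℂ (Rel.rel4 (q := q))

noncomputable def σ : RingQuot (Rel q) →ₐ[ℂ] RingQuot (Rel q) :=
  RingQuot.liftAlgHom ℂ ⟨σf q, σf_rel q⟩

lemma σ_mk (x : FreeAlgebra ℂ (Fin 3)) : σ q (mk q x) = σf q x :=
  RingQuot.liftAlgHom_mkAlgHom_apply ℂ (σf q) (σf_rel q) x

lemma σ_mk_ι (i : Fin 3) : σ q (mk q (FreeAlgebra.ι ℂ i)) = -(mk q (FreeAlgebra.ι ℂ i)) := by
  rw [σ_mk, σf_ι]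

lemma σ_k : σ q (k q) = -(k q) := σ_mk_ι q 0
lemma σ_l : σ q (l q) = -(l q) := σ_mk_ι q 1
lemma σ_l' : σ q (l' q) = -(l' q) := σ_mk_ι q 2

lemma σσ_apply (a : RingQuot (Rel q)) : σ q (σ q a) = a := by
  obtain ⟨x, rfl⟩ := RingQuot.mkAlgHom_surjective ℂ (Rel q) a
  show σ q (σ q (mk q x)) = mk q x
  induction x with
  | grade0 r => rw [AlgHom.commutes, AlgHom.commutes, AlgHom.commutes]
  | grade1 i => rw [σ_mk_ι, map_neg, σ_mk_ι, neg_neg]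
  | mul a b ha hb => rw [map_mul, map_mul, map_mul, ha, hb]
  | add a b ha hb => rw [map_add, map_add, map_add, ha, hb]

noncomputable def r2 : RingQuot (Rel q) ≃ₐ[ℂ] RingQuot (Rel q) :=
  AlgEquiv.ofAlgHom (σ q) (σ q)
    (AlgHom.ext fun a => σσ_apply q a) (AlgHom.ext fun a => σσ_apply q a)

lemma r2_apply (a : RingQuot (Rel q)) : r2 q a = σ q a := rfl

end Stmt16

namespace Stmt16
open PodlesSphere

variable (q : ℝ)

noncomputable def S : Set (RingQuot (Rel q)) :=
  {k q ^ 2, l q ^ 2, k q * l q, l' q ^ 2, l' q * k q}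

noncomputable def A : Subalgebra ℂ (RingQuot (Rel q)) := Algebra.adjoin ℂ (S q)

lemma k2_mem : k q ^ 2 ∈ A q := Algebra.subset_adjoin (by simp [S])
lemma l2_mem : l q ^ 2 ∈ A q := Algebra.subset_adjoin (by simp [S])
lemma kl_mem : k q * l q ∈ A q := Algebra.subset_adjoin (by simp [S])
lemma l'2_mem : l' q ^ 2 ∈ A q := Algebra.subset_adjoin (by simp [S])
lemma l'k_mem : l' q * k q ∈ A q := Algebra.subset_adjoin (by simp [S])

lemma kk_mem : k q * k q ∈ A q := by rw [← pow_two]; exact k2_mem q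
lemma ll_mem : l q * l q ∈ A q := by rw [← pow_two]; exact l2_mem q
lemma l'l'_mem : l' q * l' q ∈ A q := by rw [← pow_two]; exact l'2_mem q

lemma c_ne (hq : q ≠ 0) : c q ≠ 0 :=
  pow_ne_zero _ (Complex.ofReal_ne_zero.mpr hq)

lemma hl'k (hq : q ≠ 0) : l' q * k q = (c q)⁻¹ • (k q * l' q) := by
  rw [hr2, smul_smul, inv_mul_cancel₀ (c_ne q hq), one_smul]

lemma hll' : l q * l' q = 1 - (c q * c q) • (k q * k q) := by
  rw [eq_sub_iff_add_eq, ← pow_two (c q)]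
  exact hr4 q

lemma hl'l : l' q * l q = 1 - k q * k q := by
  rw [eq_sub_iff_add_eq]
  exact hr3 q

lemma kl'_mem : k q * l' q ∈ A q := by
  rw [hr2]; exact (A q).smul_mem (l'k_mem q) _

lemma lk_mem : l q * k q ∈ A q := by
  rw [hr1]; exact (A q).smul_mem (kl_mem q) _

lemma ll'_mem : l q * l' q ∈ A q := by
  rw [hll']; exact (A q).sub_mem ((A q).one_mem) ((A q).smul_mem (kk_mem q) _)

lemma l'l_mem : l' q * l q ∈ A q := by
  rw [hl'l]; exact (A q).sub_mem ((A q).one_mem) (kk_mem q)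

/-- products of two generators lie in `A`. -/
lemma pair_mem {g h : RingQuot (Rel q)}
    (hg : g = k q ∨ g = l q ∨ g = l' q) (hh : h = k q ∨ h = l q ∨ h = l' q) :
    g * h ∈ A q := by
  rcases hg with rfl | rfl | rfl <;> rcases hh with rfl | rfl | rfl
  · exact kk_mem q
  · exact kl_mem q
  · exact kl'_mem q
  · exact lk_mem q
  · exact ll_mem q
  · exact ll'_mem q
  · exact l'k_mem q
  · exact l'l_mem q
  · exact l'l'_mem q

noncomputable def Eodd : Submodule ℂ (RingQuot (Rel q)) :=
  Submodule.span ℂ {x | ∃ a ∈ A q, x = a * k q ∨ x = a * l q ∨ x = a * l' q}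

lemma memk {a : RingQuot (Rel q)} (ha : a ∈ A q) : a * k q ∈ Eodd q :=
  Submodule.subset_span ⟨a, ha, Or.inl rfl⟩
lemma meml {a : RingQuot (Rel q)} (ha : a ∈ A q) : a * l q ∈ Eodd q :=
  Submodule.subset_span ⟨a, ha, Or.inr (Or.inl rfl)⟩
lemma meml' {a : RingQuot (Rel q)} (ha : a ∈ A q) : a * l' q ∈ Eodd q :=
  Submodule.subset_span ⟨a, ha, Or.inr (Or.inr rfl)⟩

lemma A_mul_odd {b x : RingQuot (Rel q)} (hb : b ∈ A q) (hx : x ∈ Eodd q) :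
    b * x ∈ Eodd q := by
  induction hx using Submodule.span_induction with
  | mem w hw =>
    obtain ⟨a, ha, (rfl | rfl | rfl)⟩ := hw
    · rw [← mul_assoc]; exact memk q ((A q).mul_mem hb ha)
    · rw [← mul_assoc]; exact meml q ((A q).mul_mem hb ha)
    · rw [← mul_assoc]; exact meml' q ((A q).mul_mem hb ha)
  | zero => rw [mul_zero]; exact (Eodd q).zero_mem
  | add x y hx hy ihx ihy => rw [mul_add]; exact (Eodd q).add_mem ihx ihy
  | smul r x hx ihx => rw [mul_smul_comm]; exact (Eodd q).smul_mem r ihx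

lemma gen_mul_A (hq : q ≠ 0) {a : RingQuot (Rel q)} (ha : a ∈ A q) :
    k q * a ∈ Eodd q ∧ l q * a ∈ Eodd q ∧ l' q * a ∈ Eodd q := by
  -- commutation helpers
  have h1 : ∀ x, l q * (k q * x) = c q • (k q * (l q * x)) := fun x => by
    rw [← mul_assoc, hr1, smul_mul_assoc, mul_assoc]
  have h2 : ∀ x, k q * (l' q * x) = c q • (l' q * (k q * x)) := fun x => by
    rw [← mul_assoc, hr2, smul_mul_assoc, mul_assoc]
  have h3 : ∀ x, l q * (l' q * x) = x - (c q * c q) • (k q * (k q * x)) := fun x => by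
    rw [← mul_assoc, hll', sub_mul, one_mul, smul_mul_assoc, mul_assoc]
  have h4 : ∀ x, l' q * (l q * x) = x - k q * (k q * x) := fun x => by
    rw [← mul_assoc, hl'l, sub_mul, one_mul, mul_assoc]
  have h5 : ∀ x, l' q * (k q * x) = (c q)⁻¹ • (k q * (l' q * x)) := fun x => by
    rw [← mul_assoc, hl'k q hq, smul_mul_assoc, mul_assoc]
  induction ha using Algebra.adjoin_induction with
  | mem x hx =>
    simp only [S, Set.mem_insert_iff, Set.mem_singleton_iff] at hx
    rcases hx with rfl | rfl | rfl | rfl | rfl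
    · -- x = k²
      refine ⟨?_, ?_, ?_⟩
      · have e : k q * k q ^ 2 = k q ^ 2 * k q := by rw [← pow_succ', ← pow_succ]
        rw [e]; exact memk q (k2_mem q)
      · have e : l q * k q ^ 2 = ((c q * c q) • (k q * k q)) * l q := by
          simp only [pow_two, smul_mul_assoc, mul_smul_comm, smul_smul, mul_assoc, h1, hr1]
        rw [e]; exact meml q ((A q).smul_mem (kk_mem q) _)
      · have e : l' q * k q ^ 2 = (((c q)⁻¹ * (c q)⁻¹) • (k q * k q)) * l' q := by
          simp only [pow_two, smul_mul_assoc, mul_smul_comm, smul_smul, mul_assoc, h5,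
            hl'k q hq]
        rw [e]; exact meml' q ((A q).smul_mem (kk_mem q) _)
    · -- x = l²
      refine ⟨?_, ?_, ?_⟩
      · have e : k q * l q ^ 2 = (k q * l q) * l q := by rw [pow_two, ← mul_assoc]
        rw [e]; exact meml q (kl_mem q)
      · have e : l q * l q ^ 2 = l q ^ 2 * l q := by rw [← pow_succ', ← pow_succ]
        rw [e]; exact meml q (l2_mem q)
      · have e : l' q * l q ^ 2 = (1 - k q * k q) * l q := by
          simp only [pow_two, mul_assoc, h4, sub_mul, one_mul]
        rw [e]; exact meml q ((A q).sub_mem ((A q).one_mem) (kk_mem q))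
    · -- x = k*l
      refine ⟨?_, ?_, ?_⟩
      · have e : k q * (k q * l q) = (k q * k q) * l q := by rw [← mul_assoc]
        rw [e]; exact meml q (kk_mem q)
      · have e : l q * (k q * l q) = (c q • (k q * l q)) * l q := by
          rw [h1, smul_mul_assoc, mul_assoc]
        rw [e]; exact meml q ((A q).smul_mem (kl_mem q) _)
      · have e : l' q * (k q * l q) = ((c q)⁻¹ • (1 - k q * k q)) * k q := by
          simp only [h5, hl'l, smul_mul_assoc, sub_mul, one_mul, mul_sub, mul_one, mul_assoc]
        rw [e]
        exact memk q ((A q).smul_mem ((A q).sub_mem ((A q).one_mem) (kk_mem q)) _)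
    · -- x = l'²
      refine ⟨?_, ?_, ?_⟩
      · have e : k q * l' q ^ 2 = ((c q * c q) • (l' q * l' q)) * k q := by
          simp only [pow_two, smul_mul_assoc, mul_smul_comm, smul_smul, mul_assoc, h2, hr2]
        rw [e]; exact memk q ((A q).smul_mem (l'l'_mem q) _)
      · have e : l q * l' q ^ 2 = (1 - (c q * c q) • (k q * k q)) * l' q := by
          simp only [pow_two, mul_assoc, h3, h2, hr2, sub_mul, one_mul, smul_mul_assoc,
            mul_smul_comm, smul_smul]
        rw [e]
        exact meml' q ((A q).sub_mem ((A q).one_mem) ((A q).smul_mem (kk_mem q) _))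
      · have e : l' q * l' q ^ 2 = l' q ^ 2 * l' q := by rw [← pow_succ', ← pow_succ]
        rw [e]; exact meml' q (l'2_mem q)
    · -- x = l'*k
      refine ⟨?_, ?_, ?_⟩
      · have e : k q * (l' q * k q) = (c q • (l' q * k q)) * k q := by
          rw [h2, smul_mul_assoc, mul_assoc]
        rw [e]; exact memk q ((A q).smul_mem (l'k_mem q) _)
      · have e : l q * (l' q * k q) = (1 - (c q * c q) • (k q * k q)) * k q := by
          simp only [h3, sub_mul, one_mul, smul_mul_assoc, mul_assoc]
        rw [e]
        exact memk q ((A q).sub_mem ((A q).one_mem) ((A q).smul_mem (kk_mem q) _))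
      · have e : l' q * (l' q * k q) = (l' q * l' q) * k q := by rw [← mul_assoc]
        rw [e]; exact memk q (l'l'_mem q)
  | algebraMap r =>
    refine ⟨?_, ?_, ?_⟩ <;>
      [rw [← Algebra.commutes]; rw [← Algebra.commutes]; rw [← Algebra.commutes]]
    · exact memk q ((A q).algebraMap_mem r)
    · exact meml q ((A q).algebraMap_mem r)
    · exact meml' q ((A q).algebraMap_mem r)
  | add x y hx hy ihx ihy =>
    exact ⟨by rw [mul_add]; exact (Eodd q).add_mem ihx.1 ihy.1,
      by rw [mul_add]; exact (Eodd q).add_mem ihx.2.1 ihy.2.1,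
      by rw [mul_add]; exact (Eodd q).add_mem ihx.2.2 ihy.2.2⟩
  | mul x y hx hy ihx ihy =>
    have hOdd : ∀ z ∈ Eodd q, z * y ∈ Eodd q := by
      intro z hz
      induction hz using Submodule.span_induction with
      | mem w hw =>
        obtain ⟨a', ha', (rfl | rfl | rfl)⟩ := hw
        · rw [mul_assoc]; exact A_mul_odd q ha' ihy.1
        · rw [mul_assoc]; exact A_mul_odd q ha' ihy.2.1
        · rw [mul_assoc]; exact A_mul_odd q ha' ihy.2.2
      | zero => rw [zero_mul]; exact (Eodd q).zero_mem
      | add u v hu hv ihu ihv => rw [add_mul]; exact (Eodd q).add_mem ihu ihv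
      | smul r u hu ihu => rw [smul_mul_assoc]; exact (Eodd q).smul_mem r ihu
    exact ⟨by rw [← mul_assoc]; exact hOdd _ ihx.1,
      by rw [← mul_assoc]; exact hOdd _ ihx.2.1,
      by rw [← mul_assoc]; exact hOdd _ ihx.2.2⟩

end Stmt16

namespace Stmt16
open PodlesSphere

variable (q : ℝ)

lemma odd_mul_gen {x : RingQuot (Rel q)} (hx : x ∈ Eodd q) :
    x * k q ∈ A q ∧ x * l q ∈ A q ∧ x * l' q ∈ A q := by
  induction hx using Submodule.span_induction with
  | mem w hw =>
    obtain ⟨a, ha, (rfl | rfl | rfl)⟩ := hw <;>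
      refine ⟨?_, ?_, ?_⟩ <;> rw [mul_assoc] <;>
      exact (A q).mul_mem ha (pair_mem q (by tauto) (by tauto))
  | zero =>
    refine ⟨?_, ?_, ?_⟩ <;> rw [zero_mul] <;> exact (A q).zero_mem
  | add u v hu hv ihu ihv =>
    exact ⟨by rw [add_mul]; exact (A q).add_mem ihu.1 ihv.1,
      by rw [add_mul]; exact (A q).add_mem ihu.2.1 ihv.2.1,
      by rw [add_mul]; exact (A q).add_mem ihu.2.2 ihv.2.2⟩
  | smul r u hu ihu =>
    exact ⟨by rw [smul_mul_assoc]; exact (A q).smul_mem ihu.1 r,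
      by rw [smul_mul_assoc]; exact (A q).smul_mem ihu.2.1 r,
      by rw [smul_mul_assoc]; exact (A q).smul_mem ihu.2.2 r⟩

lemma odd_mul_A (hq : q ≠ 0) {x b : RingQuot (Rel q)} (hx : x ∈ Eodd q) (hb : b ∈ A q) :
    x * b ∈ Eodd q := by
  induction hx using Submodule.span_induction with
  | mem w hw =>
    obtain ⟨a, ha, (rfl | rfl | rfl)⟩ := hw <;> rw [mul_assoc]
    · exact A_mul_odd q ha (gen_mul_A q hq hb).1
    · exact A_mul_odd q ha (gen_mul_A q hq hb).2.1
    · exact A_mul_odd q ha (gen_mul_A q hq hb).2.2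
  | zero => rw [zero_mul]; exact (Eodd q).zero_mem
  | add u v hu hv ihu ihv => rw [add_mul]; exact (Eodd q).add_mem ihu ihv
  | smul r u hu ihu => rw [smul_mul_assoc]; exact (Eodd q).smul_mem r ihu

lemma odd_mul_odd (hq : q ≠ 0) {x y : RingQuot (Rel q)} (hx : x ∈ Eodd q) (hy : y ∈ Eodd q) :
    x * y ∈ A q := by
  induction hy using Submodule.span_induction with
  | mem w hw =>
    obtain ⟨b, hb, (rfl | rfl | rfl)⟩ := hw <;> rw [← mul_assoc]
    · exact (odd_mul_gen q (odd_mul_A q hq hx hb)).1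
    · exact (odd_mul_gen q (odd_mul_A q hq hx hb)).2.1
    · exact (odd_mul_gen q (odd_mul_A q hq hx hb)).2.2
  | zero => rw [mul_zero]; exact (A q).zero_mem
  | add u v hu hv ihu ihv => rw [mul_add]; exact (A q).add_mem ihu ihv
  | smul r u hu ihu => rw [mul_smul_comm]; exact (A q).smul_mem ihu r

lemma sup_mul (hq : q ≠ 0) {u v : RingQuot (Rel q)}
    (hu : u ∈ Subalgebra.toSubmodule (A q) ⊔ Eodd q)
    (hv : v ∈ Subalgebra.toSubmodule (A q) ⊔ Eodd q) :
    u * v ∈ Subalgebra.toSubmodule (A q) ⊔ Eodd q := by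
  obtain ⟨a, ha, x, hx, rfl⟩ := Submodule.mem_sup.mp hu
  obtain ⟨b, hb, y, hy, rfl⟩ := Submodule.mem_sup.mp hv
  have ha' : a ∈ A q := ha
  have hb' : b ∈ A q := hb
  have : (a + x) * (b + y) = (a * b + x * y) + (a * y + x * b) := by
    rw [add_mul, mul_add, mul_add]; abel
  rw [this]
  refine add_mem (add_mem ?_ ?_) (add_mem ?_ ?_)
  · exact Submodule.mem_sup_left ((A q).mul_mem ha' hb')
  · exact Submodule.mem_sup_left (odd_mul_odd q hq hx hy)
  · exact Submodule.mem_sup_right (A_mul_odd q ha' hy)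
  · exact Submodule.mem_sup_right (odd_mul_A q hq hx hb')

lemma top_decomp (hq : q ≠ 0) (z : RingQuot (Rel q)) :
    z ∈ Subalgebra.toSubmodule (A q) ⊔ Eodd q := by
  obtain ⟨x, rfl⟩ := RingQuot.mkAlgHom_surjective ℂ (Rel q) z
  show mk q x ∈ _
  induction x with
  | grade0 r =>
    rw [AlgHom.commutes]
    exact Submodule.mem_sup_left ((A q).algebraMap_mem r)
  | grade1 i =>
    fin_cases i
    · exact Submodule.mem_sup_right (by simpa [k, K] using memk q ((A q).one_mem))
    · exact Submodule.mem_sup_right (by simpa [l, L] using meml q ((A q).one_mem))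
    · exact Submodule.mem_sup_right (by simpa [l', L'] using meml' q ((A q).one_mem))
  | mul a b ha hb => rw [map_mul]; exact sup_mul q hq ha hb
  | add a b ha hb => rw [map_add]; exact add_mem ha hb

lemma σ_fix {a : RingQuot (Rel q)} (ha : a ∈ A q) : σ q a = a := by
  have e : ∀ a b : RingQuot (Rel q), -a * -b = a * b := fun a b => neg_mul_neg a b
  have e2 : ∀ a : RingQuot (Rel q), (-a) ^ 2 = a ^ 2 := fun a => neg_sq a
  induction ha using Algebra.adjoin_induction with
  | mem x hx =>
    simp only [S, Set.mem_insert_iff, Set.mem_singleton_iff] at hx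
    rcases hx with rfl | rfl | rfl | rfl | rfl
    · rw [map_pow, σ_k, e2]
    · rw [map_pow, σ_l, e2]
    · rw [map_mul, σ_k, σ_l, e]
    · rw [map_pow, σ_l', e2]
    · rw [map_mul, σ_l', σ_k, e]
  | algebraMap r => exact AlgHom.commutes _ r
  | add x y hx hy ihx ihy => rw [map_add, ihx, ihy]
  | mul x y hx hy ihx ihy => rw [map_mul, ihx, ihy]

lemma σ_negodd {x : RingQuot (Rel q)} (hx : x ∈ Eodd q) : σ q x = -x := by
  have em : ∀ a b : RingQuot (Rel q), a * -b = -(a * b) := fun a b => mul_neg a b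
  induction hx using Submodule.span_induction with
  | mem w hw =>
    obtain ⟨a, ha, (rfl | rfl | rfl)⟩ := hw
    · rw [map_mul, σ_fix q ha, σ_k, em]
    · rw [map_mul, σ_fix q ha, σ_l, em]
    · rw [map_mul, σ_fix q ha, σ_l', em]
  | zero => rw [map_zero, neg_zero]
  | add u v hu hv ihu ihv => rw [map_add, ihu, ihv, neg_add]
  | smul r u hu ihu => rw [map_smul, ihu, smul_neg]

lemma fixed_eq (hq : q ≠ 0) : {a : RingQuot (Rel q) | σ q a = a} = (A q : Set (RingQuot (Rel q))) := by
  ext a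
  simp only [Set.mem_setOf_eq, SetLike.mem_coe]
  constructor
  · intro h
    obtain ⟨b, hb, x, hx, hbx⟩ := Submodule.mem_sup.mp (top_decomp q hq a)
    have hσ : σ q a = b - x := by
      rw [← hbx, map_add, σ_fix q hb, σ_negodd q hx, sub_eq_add_neg]
    have hxx : -x = x := by
      have h1 : b + -x = b + x := by rw [← sub_eq_add_neg, ← hσ, h, hbx]
      exact add_left_cancel h1
    have h2 : (2 : ℂ) • x = 0 := by
      rw [two_smul]; nth_rewrite 1 [← hxx]; exact neg_add_cancel x
    have hx0 : x = 0 := by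
      rcases smul_eq_zero.mp h2 with h' | h'
      · exact absurd h' two_ne_zero
      · exact h'
    rw [← hbx, hx0, add_zero]; exact hb
  · intro h
    exact σ_fix q h

end Stmt16

open PodlesSphere in
/-- The assignment `K ↦ -K`, `L ↦ -L`, `L′ ↦ -L′` extends to a well-defined
`ℂ`-algebra automorphism `r₂` of `O(S²_{q,1})` (the antipodal `ℤ₂`-action) squaring to the
identity, and its fixed-point subalgebra is the unital subalgebra generated by
`K², L², KL, (L′)², L′K`, i.e. the coordinate algebra `O(ℝP²_q)` of the quantum real
projective plane. -/
theorem stmt16 (q : ℝ) (hq0 : 0 < q) (hq1 : q < 1) :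
    ∃ r₂ : RingQuot (PodlesSphere.Rel q) ≃ₐ[ℂ] RingQuot (PodlesSphere.Rel q),
      r₂ (RingQuot.mkAlgHom ℂ (PodlesSphere.Rel q) K) =
        -(RingQuot.mkAlgHom ℂ (PodlesSphere.Rel q) K) ∧
      r₂ (RingQuot.mkAlgHom ℂ (PodlesSphere.Rel q) L) =
        -(RingQuot.mkAlgHom ℂ (PodlesSphere.Rel q) L) ∧
      r₂ (RingQuot.mkAlgHom ℂ (PodlesSphere.Rel q) L') =
        -(RingQuot.mkAlgHom ℂ (PodlesSphere.Rel q) L') ∧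
      (∀ a, r₂ (r₂ a) = a) ∧
      {a | r₂ a = a} =
        (Algebra.adjoin ℂ
          ({RingQuot.mkAlgHom ℂ (PodlesSphere.Rel q) K ^ 2,
            RingQuot.mkAlgHom ℂ (PodlesSphere.Rel q) L ^ 2,
            RingQuot.mkAlgHom ℂ (PodlesSphere.Rel q) K *
              RingQuot.mkAlgHom ℂ (PodlesSphere.Rel q) L,
            RingQuot.mkAlgHom ℂ (PodlesSphere.Rel q) L' ^ 2,
            RingQuot.mkAlgHom ℂ (PodlesSphere.Rel q) L' *
              RingQuot.mkAlgHom ℂ (PodlesSphere.Rel q) K} :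
            Set (RingQuot (PodlesSphere.Rel q))) : Set (RingQuot (PodlesSphere.Rel q))) := by
  have hq : q ≠ 0 := ne_of_gt hq0
  exact ⟨Stmt16.r2 q, Stmt16.σ_k q, Stmt16.σ_l q, Stmt16.σ_l' q, Stmt16.σσ_apply q,
    Stmt16.fixed_eq q hq⟩
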